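/- A pair of homomorphisms whose difference maps a generating set into a subalgebra is a quasihomomorphism: let Â be a topological ℂ-algebra and A a topological ℂ-algebra with jointly continuous multiplications, let α, ᾱ : A → Â be continuous algebra homomorphisms, and let B ⊆ Â be a closed (non-unital) subalgebra. Let X ⊆ A be a subset such that the topological closure of the non-unital subalgebra of A generated by X equals A. If for every x ∈ X one has α(x) − ᾱ(x) ∈ B, α(x)·B ⊆ B and B·α(x) ⊆ B, then for every a ∈ A one has α(a) − ᾱ(a) ∈ B, α(a)·B ⊆ B and B·α(a) ⊆ B; that is, (α,ᾱ) is a quasihomomorphism from A to B relative to Â. -/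

import Mathlib

/-- A pair of continuous homomorphisms whose difference maps a generating set into a
closed subalgebra `B` (which is moreover stable under multiplication by the images of
the generating set) is a quasihomomorphism: the same three conditions hold for every
element of `A`. -/
theorem stmt8 {A Bhat : Type*}
    [NonUnitalRing A] [Module ℂ A] [IsScalarTower ℂ A A] [SMulCommClass ℂ A A]
    [TopologicalSpace A] [IsTopologicalRing A]
    [NonUnitalRing Bhat] [Module ℂ Bhat] [IsScalarTower ℂ Bhat Bhat]
    [SMulCommClass ℂ Bhat Bhat] [TopologicalSpace Bhat] [IsTopologicalRing Bhat]
    (α β : A →ₙₐ[ℂ] Bhat) (hα : Continuous α) (hβ : Continuous β)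
    (B : NonUnitalSubalgebra ℂ Bhat) (hB : IsClosed (B : Set Bhat))
    (X : Set A)
    (hX : closure (NonUnitalAlgebra.adjoin ℂ X : Set A) = Set.univ)
    (hdiff : ∀ x ∈ X, α x - β x ∈ B)
    (hleft : ∀ x ∈ X, ∀ b ∈ B, α x * b ∈ B)
    (hright : ∀ x ∈ X, ∀ b ∈ B, b * α x ∈ B) :
    (∀ a : A, α a - β a ∈ B)
    ∧ (∀ a : A, ∀ b ∈ B, α a * b ∈ B)
    ∧ (∀ a : A, ∀ b ∈ B, b * α a ∈ B) := by
  classical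
  -- the set of elements satisfying all three conditions
  set S : Set A := {a | (α a - β a ∈ B) ∧ ((∀ b ∈ B, α a * b ∈ B) ∧ (∀ b ∈ B, b * α a ∈ B))}
    with hSdef
  -- S is a non-unital subalgebra
  have zero_mem : (0 : A) ∈ S := by
    refine ⟨?_, ⟨fun b hb => ?_, fun b hb => ?_⟩⟩
    · simp only [map_zero, sub_zero]; exact B.zero_mem
    · simp only [map_zero, zero_mul]; exact B.zero_mem
    · simp only [map_zero, mul_zero]; exact B.zero_mem
  have add_mem : ∀ {a a' : A}, a ∈ S → a' ∈ S → a + a' ∈ S := by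
    rintro a a' ⟨h1, h2, h3⟩ ⟨h1', h2', h3'⟩
    refine ⟨?_, fun b hb => ?_, fun b hb => ?_⟩
    · have : α (a + a') - β (a + a') = (α a - β a) + (α a' - β a') := by
        simp only [map_add]; abel
      rw [this]; exact B.add_mem h1 h1'
    · have : α (a + a') * b = α a * b + α a' * b := by simp [map_add, add_mul]
      rw [this]; exact B.add_mem (h2 b hb) (h2' b hb)
    · have : b * α (a + a') = b * α a + b * α a' := by simp [map_add, mul_add]
      rw [this]; exact B.add_mem (h3 b hb) (h3' b hb)
  have smul_mem : ∀ (c : ℂ) {a : A}, a ∈ S → c • a ∈ S := by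
    rintro c a ⟨h1, h2, h3⟩
    refine ⟨?_, fun b hb => ?_, fun b hb => ?_⟩
    · have : α (c • a) - β (c • a) = c • (α a - β a) := by
        simp [map_smul, smul_sub]
      rw [this]; exact B.smul_mem c h1
    · have : α (c • a) * b = c • (α a * b) := by simp [map_smul, smul_mul_assoc]
      rw [this]; exact B.smul_mem c (h2 b hb)
    · have : b * α (c • a) = c • (b * α a) := by simp [map_smul, mul_smul_comm]
      rw [this]; exact B.smul_mem c (h3 b hb)
  have mul_mem : ∀ {a a' : A}, a ∈ S → a' ∈ S → a * a' ∈ S := by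
    rintro a a' ⟨h1, h2, h3⟩ ⟨h1', h2', h3'⟩
    refine ⟨?_, fun b hb => ?_, fun b hb => ?_⟩
    · have key : α (a * a') - β (a * a') =
          α a * (α a' - β a') + ((α a - β a) * α a' - (α a - β a) * (α a' - β a')) := by
        simp only [map_mul]; noncomm_ring
      rw [key]
      exact B.add_mem (h2 _ h1') (B.sub_mem (h3' _ h1) (B.mul_mem h1 h1'))
    · have : α (a * a') * b = α a * (α a' * b) := by simp [map_mul, mul_assoc]
      rw [this]; exact h2 _ (h2' b hb)
    · have : b * α (a * a') = (b * α a) * α a' := by simp [map_mul, mul_assoc]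
      rw [this]; exact h3' _ (h3 b hb)
  let S' : NonUnitalSubalgebra ℂ A :=
    { carrier := S
      zero_mem' := zero_mem
      add_mem' := add_mem
      smul_mem' := smul_mem
      mul_mem' := mul_mem }
  -- S is closed
  have hclosed : IsClosed S := by
    have h1 : IsClosed {a : A | α a - β a ∈ B} := hB.preimage (hα.sub hβ)
    have h2 : IsClosed {a : A | ∀ b ∈ B, α a * b ∈ B} := by
      have heq : {a : A | ∀ b ∈ B, α a * b ∈ B} =
          ⋂ b ∈ (B : Set Bhat), {a : A | α a * b ∈ B} := by
        ext a; simp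
      rw [heq]
      exact isClosed_biInter fun b hb => hB.preimage (hα.mul continuous_const)
    have h3 : IsClosed {a : A | ∀ b ∈ B, b * α a ∈ B} := by
      have heq : {a : A | ∀ b ∈ B, b * α a ∈ B} =
          ⋂ b ∈ (B : Set Bhat), {a : A | b * α a ∈ B} := by
        ext a; simp
      rw [heq]
      exact isClosed_biInter fun b hb => hB.preimage (continuous_const.mul hα)
    exact h1.inter (h2.inter h3)
  -- X ⊆ S, hence adjoin ℂ X ≤ S', hence everything is in S
  have hXS : X ⊆ S := fun x hx =>
    ⟨hdiff x hx, fun b hb => hleft x hx b hb, fun b hb => hright x hx b hb⟩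
  have hadj : (NonUnitalAlgebra.adjoin ℂ X : Set A) ⊆ S :=
    NonUnitalAlgebra.adjoin_le (S := S') hXS
  have hall : ∀ a : A, a ∈ S := by
    intro a
    have : a ∈ closure (NonUnitalAlgebra.adjoin ℂ X : Set A) := by
      rw [hX]; trivial
    exact hclosed.closure_subset_iff.mpr hadj this
  exact ⟨fun a => (hall a).1, fun a => (hall a).2.1, fun a => (hall a).2.2⟩
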